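/- If the Cheeger isoperimetric constant of Thompson's group F with respect to the generating set {x₀, x₁, x₂} (where x₂ = x₀⁻¹x₁x₀) satisfies ι*(F; {x₀, x₁, x₂}) ≥ 1, then the Cheeger isoperimetric constant of F with respect to the generating multi-set {x₁, x̄₁, x₀, x₀} (where x̄₁ = x₁x₀⁻¹ and x₀ is taken with multiplicity two) satisfies ι*(F; {x₁, x̄₁, x₀, x₀}) ≥ 1. -/

import Mathlib

/-- The group element corresponding to a letter `(i, b)`: the generator `A i` itself if
`b = true`, and its inverse if `b = false`. -/
def genOf {G : Type*} [Group G] {ι : Type*} (A : ι → G) : ι × Bool → G :=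
  fun s => if s.2 then A s.1 else (A s.1)⁻¹

/-- The Cheeger boundary of a finite set `Y` in the right Cayley graph of `G` with respect to
the generating family `A`: the set of directed edges `(g, s)` (an edge labelled by the letter
`s` going from `g` to `g * genOf A s`) with initial vertex in `Y` and terminal vertex
outside `Y`. -/
def cheegerBoundary {G : Type*} [Group G] {ι : Type*} (A : ι → G) (Y : Finset G) :
    Set (G × ι × Bool) :=
  {e | e.1 ∈ Y ∧ e.1 * genOf A e.2 ∉ Y}

/-- The Cheeger isoperimetric constant `ι*(G; A)`: the infimum over all finite nonempty
subsets `Y ⊆ G` of `|∂*Y| / |Y|`. -/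
noncomputable def cheegerConst {G : Type*} [Group G] {ι : Type*} (A : ι → G) : ℝ :=
  ⨅ Y : {Y : Finset G // Y.Nonempty},
    (Nat.card (cheegerBoundary A Y.1) : ℝ) / ((Y.1.card : ℝ))

/-- The two relators of Thompson's group `F` in generators `x₀, x₁`:
`x₁^{x₀²} = x₁^{x₀x₁}` and `x₁^{x₀³} = x₁^{x₀²x₁}`, where `a^b = b⁻¹ab`. -/
def thompsonRels : Set (FreeGroup (Fin 2)) :=
  {((FreeGroup.of 0 ^ 2)⁻¹ * FreeGroup.of 1 * FreeGroup.of 0 ^ 2)⁻¹ *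
     ((FreeGroup.of 0 * FreeGroup.of 1)⁻¹ * FreeGroup.of 1 *
       (FreeGroup.of 0 * FreeGroup.of 1)),
   ((FreeGroup.of 0 ^ 3)⁻¹ * FreeGroup.of 1 * FreeGroup.of 0 ^ 3)⁻¹ *
     ((FreeGroup.of 0 ^ 2 * FreeGroup.of 1)⁻¹ * FreeGroup.of 1 *
       (FreeGroup.of 0 ^ 2 * FreeGroup.of 1))}

/-- Thompson's group `F`, given by the finite presentation
`⟨x₀, x₁ ∣ x₁^{x₀²} = x₁^{x₀x₁}, x₁^{x₀³} = x₁^{x₀²x₁}⟩`. -/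
abbrev ThompsonF := PresentedGroup thompsonRels

/-- The generator `x₀` of Thompson's group `F`. -/
def x₀ : ThompsonF := PresentedGroup.of 0

/-- The generator `x₁` of Thompson's group `F`. -/
def x₁ : ThompsonF := PresentedGroup.of 1

open Finset

open Classical in
/-- Number of `w`-exits from `Y`. -/
noncomputable def exitCard {G : Type*} [Group G] (Y : Finset G) (w : G) : ℕ :=
  (Y.filter (fun y => y * w ∉ Y)).card

lemma exitCard_congr {G : Type*} [Group G] (Y : Finset G) {w₁ w₂ : G} (h : w₁ = w₂) :
    exitCard Y w₁ = exitCard Y w₂ := by rw [h]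

lemma card_cheegerBoundary {G : Type*} [Group G] {ι : Type*} [Fintype ι]
    (A : ι → G) (Y : Finset G) :
    Nat.card (cheegerBoundary A Y) = ∑ s : ι × Bool, exitCard Y (genOf A s) := by
  classical
  have hset : cheegerBoundary A Y =
      ↑((Y ×ˢ (Finset.univ : Finset (ι × Bool))).filter
        (fun e => e.1 * genOf A e.2 ∉ Y)) := by
    ext e
    simp [cheegerBoundary]
  rw [hset, Nat.card_coe_set_eq, Set.ncard_coe_finset]
  rw [Finset.card_filter, Finset.sum_product, Finset.sum_comm]
  unfold exitCard
  simp [Finset.card_filter]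

lemma exitCard_subadd {G : Type*} [Group G] (Y : Finset G) (u v : G) :
    exitCard Y (u * v) ≤ exitCard Y u + exitCard Y v := by
  classical
  unfold exitCard
  have hsub : Y.filter (fun y => y * (u * v) ∉ Y) ⊆
      Y.filter (fun y => y * u ∉ Y) ∪ Y.filter (fun y => y * u ∈ Y ∧ y * (u * v) ∉ Y) := by
    intro y hy
    simp only [mem_filter, mem_union] at *
    by_cases h1 : y * u ∈ Y
    · exact Or.inr ⟨hy.1, h1, hy.2⟩
    · exact Or.inl ⟨hy.1, h1⟩
  refine le_trans (card_le_card hsub) (le_trans (card_union_le _ _) ?_)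
  have h2 : (Y.filter (fun y => y * u ∈ Y ∧ y * (u * v) ∉ Y)).card ≤
      (Y.filter (fun y => y * v ∉ Y)).card := by
    apply Finset.card_le_card_of_injOn (fun y => y * u)
    · intro y hy
      simp only [Finset.mem_coe, mem_filter] at *
      refine ⟨hy.2.1, ?_⟩
      rw [mul_assoc]
      exact hy.2.2
    · intro a _ b _ hab
      exact mul_right_cancel hab
  exact add_le_add le_rfl h2

open Classical in
lemma exitCard_image_mul {G : Type*} [Group G] (Y : Finset G) (t s : G) :
    exitCard (Y.image (· * t)) s = exitCard Y (t * s * t⁻¹) := by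
  classical
  unfold exitCard
  have hfe : (Y.image (· * t)).filter (fun g => g * s ∉ Y.image (· * t)) =
      (Y.filter (fun y => y * (t * s * t⁻¹) ∉ Y)).image (· * t) := by
    ext g
    simp only [mem_filter, mem_image]
    constructor
    · rintro ⟨⟨y, hy, rfl⟩, hns⟩
      exact ⟨y, ⟨hy, fun hc => hns ⟨y * (t * s * t⁻¹), hc, by group⟩⟩, rfl⟩
    · rintro ⟨y, ⟨hy, hns⟩, rfl⟩
      refine ⟨⟨y, hy, rfl⟩, ?_⟩
      rintro ⟨z, hz, hzt⟩
      apply hns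
      have h2 : z = y * (t * s * t⁻¹) := by
        have h3 : z * t = y * (t * s * t⁻¹) * t := by rw [hzt]; group
        exact mul_right_cancel h3
      rwa [← h2]
  rw [hfe]
  exact Finset.card_image_of_injective _ (mul_left_injective t)
/-- If the Cheeger isoperimetric constant of Thompson's group `F` with
respect to the generating set `{x₀, x₁, x₂}` (where `x₂ = x₀⁻¹x₁x₀`) satisfies
`ι*(F; {x₀, x₁, x₂}) ≥ 1`, then the Cheeger isoperimetric constant of `F` with respect to
the generating multi-set `{x₁, x̄₁, x₀, x₀}` (where `x̄₁ = x₁x₀⁻¹` and `x₀` is taken with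
multiplicity two) satisfies `ι*(F; {x₁, x̄₁, x₀, x₀}) ≥ 1`. -/
theorem cheegerConst_multiset_ge_one_of_x₀x₁x₂_ge_one
    (h : 1 ≤ cheegerConst (![x₀, x₁, x₀⁻¹ * x₁ * x₀] : Fin 3 → ThompsonF)) :
    1 ≤ cheegerConst (![x₁, x₁ * x₀⁻¹, x₀, x₀] : Fin 4 → ThompsonF) := by
  classical
  set A : Fin 3 → ThompsonF := ![x₀, x₁, x₀⁻¹ * x₁ * x₀] with hAdef
  set B : Fin 4 → ThompsonF := ![x₁, x₁ * x₀⁻¹, x₀, x₀] with hBdef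
  have hbdd : BddBelow (Set.range fun Y : {Y : Finset ThompsonF // Y.Nonempty} =>
      (Nat.card (cheegerBoundary A Y.1) : ℝ) / (Y.1.card : ℝ)) := by
    refine ⟨0, ?_⟩
    rintro r ⟨Y, rfl⟩
    positivity
  have hA : ∀ Z : Finset ThompsonF, Z.Nonempty →
      (Z.card : ℝ) ≤ (Nat.card (cheegerBoundary A Z) : ℝ) := by
    intro Z hZ
    have h1 : (1 : ℝ) ≤ (Nat.card (cheegerBoundary A Z) : ℝ) / (Z.card : ℝ) :=
      le_trans h (ciInf_le hbdd ⟨Z, hZ⟩)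
    have hpos : (0 : ℝ) < (Z.card : ℝ) := by exact_mod_cast hZ.card_pos
    exact (one_le_div hpos).mp h1
  haveI : Nonempty {Y : Finset ThompsonF // Y.Nonempty} :=
    ⟨⟨{1}, Finset.singleton_nonempty 1⟩⟩
  unfold cheegerConst
  refine le_ciInf fun Yp => ?_
  obtain ⟨Y, hY⟩ := Yp
  have hpos : (0 : ℝ) < (Y.card : ℝ) := by exact_mod_cast hY.card_pos
  rw [one_le_div hpos]
  set Z := Y.image (· * x₀) with hZdef
  have hZne : Z.Nonempty := hY.image _
  have hcard : Z.card = Y.card := Finset.card_image_of_injective _ (mul_left_injective x₀)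
  have key : Nat.card (cheegerBoundary A Z) ≤ Nat.card (cheegerBoundary B Y) := by
    rw [card_cheegerBoundary, card_cheegerBoundary]
    simp_rw [hZdef, exitCard_image_mul]
    rw [Fintype.sum_prod_type, Fintype.sum_prod_type]
    simp only [Fin.sum_univ_three, Fin.sum_univ_four, Fintype.sum_bool, hAdef, hBdef, genOf,
      Matrix.cons_val_zero, Matrix.cons_val_one, Matrix.head_cons, Matrix.cons_val_two,
      Matrix.tail_cons, Matrix.cons_val_three, Matrix.head_fin_const, if_true, if_false,
      Bool.false_eq_true, ite_true, ite_false]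
    have e1 : exitCard Y (x₀ * x₀ * x₀⁻¹) = exitCard Y x₀ := exitCard_congr Y (by group)
    have e2 : exitCard Y (x₀ * x₀⁻¹ * x₀⁻¹) = exitCard Y x₀⁻¹ := exitCard_congr Y (by group)
    have e3 : exitCard Y (x₀ * (x₀⁻¹ * x₁ * x₀) * x₀⁻¹) = exitCard Y x₁ :=
      exitCard_congr Y (by group)
    have e4 : exitCard Y (x₀ * (x₀⁻¹ * x₁ * x₀)⁻¹ * x₀⁻¹) = exitCard Y x₁⁻¹ :=
      exitCard_congr Y (by group)
    have s1 : exitCard Y (x₀ * x₁ * x₀⁻¹) ≤ exitCard Y x₀ + exitCard Y (x₁ * x₀⁻¹) :=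
      calc exitCard Y (x₀ * x₁ * x₀⁻¹) = exitCard Y (x₀ * (x₁ * x₀⁻¹)) :=
            exitCard_congr Y (by group)
        _ ≤ _ := exitCard_subadd Y _ _
    have s2 : exitCard Y (x₀ * x₁⁻¹ * x₀⁻¹) ≤ exitCard Y (x₁ * x₀⁻¹)⁻¹ + exitCard Y x₀⁻¹ :=
      calc exitCard Y (x₀ * x₁⁻¹ * x₀⁻¹) = exitCard Y ((x₁ * x₀⁻¹)⁻¹ * x₀⁻¹) :=
            exitCard_congr Y (by group)
        _ ≤ _ := exitCard_subadd Y _ _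
    linarith
  calc (Y.card : ℝ) = (Z.card : ℝ) := by rw [hcard]
    _ ≤ (Nat.card (cheegerBoundary A Z) : ℝ) := hA Z hZne
    _ ≤ (Nat.card (cheegerBoundary B Y) : ℝ) := by exact_mod_cast key
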